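/- Let (X,d) be a metric space with bounded local complexity and μ a probability measure on X. Then limsup_{r→0} (log Σ_{p=1}^{k(r)} (∫ 𝟙_{p,r} dμ)²)/(log r) = D̄₂(μ) and liminf_{r→0} (log Σ_{p=1}^{k(r)} (∫ 𝟙_{p,r} dμ)²)/(log r) = D̲₂(μ). In particular, for any ε > 0 there is r₀ > 0 such that for all 0 < r < r₀, r^{D̄₂(μ)+ε} ≤ Σ_{p=1}^{k(r)} (∫ 𝟙_{p,r} dμ)² ≤ r^{D̲₂(μ)−ε}. -/

import Mathlib

open MeasureTheory Filter Topology
open scoped ENNReal NNReal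

/-- The upper correlation dimension `D̄₂(μ)`. -/
noncomputable def corrUpper {X : Type*} [MetricSpace X] [MeasurableSpace X]
    (μ : Measure X) : ℝ :=
  Filter.limsup
    (fun r : ℝ => Real.log (∫ x, (μ (Metric.ball x r)).toReal ∂μ) / Real.log r)
    (nhdsWithin 0 (Set.Ioi 0))

/-- The lower correlation dimension `D̲₂(μ)`. -/
noncomputable def corrLower {X : Type*} [MetricSpace X] [MeasurableSpace X]
    (μ : Measure X) : ℝ :=
  Filter.liminf
    (fun r : ℝ => Real.log (∫ x, (μ (Metric.ball x r)).toReal ∂μ) / Real.log r)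
    (nhdsWithin 0 (Set.Ioi 0))

/-! ### Auxiliary lemmas -/

private lemma BLC_div_le_div_neg {a b c : ℝ} (hab : a ≤ b) (hc : c < 0) : b / c ≤ a / c := by
  rw [div_eq_mul_inv, div_eq_mul_inv]
  exact mul_le_mul_of_nonpos_right hab (inv_nonpos.2 hc.le)

private lemma BLC_abs_div {L T b : ℝ} (hT : 1 ≤ T) (h1 : L ≤ b) (h2 : -(b*T) ≤ L) :
    |L / (-T)| ≤ b := by
  have hT0 : (0:ℝ) < T := lt_of_lt_of_le one_pos hT
  have hb : 0 ≤ b := by nlinarith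
  have habs : |L| ≤ b * T := abs_le.2 ⟨by linarith, by nlinarith⟩
  calc |L / (-T)| = |L| / T := by rw [abs_div, abs_neg, abs_of_pos hT0]
    _ ≤ b := by rw [div_le_iff₀ hT0]; linarith

private lemma BLC_arith2 {T l4 c₀ M A ε : ℝ} (hT : 0 < T) (hl4 : 0 < l4) (hc0 : 0 ≤ c₀)
    (hM : 0 ≤ M) (hA2 : -(M*(T+l4)) ≤ A) (hK : c₀ + M*l4 ≤ ε*T) :
    (c₀ - A)/T ≤ (-A)/(T+l4) + ε := by
  have hT' : 0 < T + l4 := by linarith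
  rw [div_add' _ _ _ (ne_of_gt hT'), div_le_div_iff₀ hT hT']
  nlinarith [mul_le_mul_of_nonneg_right hK (le_of_lt hT'),
    mul_le_mul_of_nonneg_right hA2 hl4.le]

private lemma BLC_quarter_map :
    Filter.map (fun s : ℝ => 4⁻¹ * s) (nhdsWithin 0 (Set.Ioi 0)) =
      nhdsWithin 0 (Set.Ioi 0) := by
  have h := (Homeomorph.mulLeft₀ (4⁻¹ : ℝ) (by norm_num)).isEmbedding.map_nhdsWithin_eq
    (Set.Ioi (0:ℝ)) 0
  rw [Homeomorph.coe_mulLeft₀] at h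
  simpa [Set.image_const_mul_Ioi_zero (by norm_num : (0:ℝ) < 4⁻¹)] using h

private lemma BLC_endgame (g h : ℝ → ℝ) (M₁ : ℝ)
    (hgb : ∀ᶠ r in nhdsWithin (0:ℝ) (Set.Ioi 0), |g r| ≤ M₁)
    (hhb : ∀ᶠ r in nhdsWithin (0:ℝ) (Set.Ioi 0), |h r| ≤ M₁)
    (hle : ∀ᶠ r in nhdsWithin (0:ℝ) (Set.Ioi 0), g r ≤ h r)
    (hq : ∀ ε > (0:ℝ), ∀ᶠ s in nhdsWithin (0:ℝ) (Set.Ioi 0), h s ≤ g (4⁻¹ * s) + ε) :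
    Filter.limsup g (nhdsWithin (0:ℝ) (Set.Ioi 0)) =
      Filter.limsup h (nhdsWithin (0:ℝ) (Set.Ioi 0)) ∧
    Filter.liminf g (nhdsWithin (0:ℝ) (Set.Ioi 0)) =
      Filter.liminf h (nhdsWithin (0:ℝ) (Set.Ioi 0)) := by
  have transfer : ∀ P : ℝ → Prop, (∀ᶠ r in nhdsWithin (0:ℝ) (Set.Ioi 0), P r) →
      (∀ᶠ s in nhdsWithin (0:ℝ) (Set.Ioi 0), P (4⁻¹ * s)) := by
    intro P hP
    have h0 : ∀ᶠ r in Filter.map (fun s : ℝ => 4⁻¹ * s) (nhdsWithin (0:ℝ) (Set.Ioi 0)), P r := by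
      rw [BLC_quarter_map]; exact hP
    exact Filter.eventually_map.1 h0
  have hgqb : ∀ᶠ s in nhdsWithin (0:ℝ) (Set.Ioi 0), |g (4⁻¹ * s)| ≤ M₁ :=
    transfer _ hgb
  have bg_le : IsBoundedUnder (· ≤ ·) (nhdsWithin (0:ℝ) (Set.Ioi 0)) g :=
    ⟨M₁, Filter.eventually_map.2 (hgb.mono fun r hr => (abs_le.1 hr).2)⟩
  have bg_ge : IsBoundedUnder (· ≥ ·) (nhdsWithin (0:ℝ) (Set.Ioi 0)) g :=
    ⟨-M₁, Filter.eventually_map.2 (hgb.mono fun r hr => (abs_le.1 hr).1)⟩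
  have bh_le : IsBoundedUnder (· ≤ ·) (nhdsWithin (0:ℝ) (Set.Ioi 0)) h :=
    ⟨M₁, Filter.eventually_map.2 (hhb.mono fun r hr => (abs_le.1 hr).2)⟩
  have bh_ge : IsBoundedUnder (· ≥ ·) (nhdsWithin (0:ℝ) (Set.Ioi 0)) h :=
    ⟨-M₁, Filter.eventually_map.2 (hhb.mono fun r hr => (abs_le.1 hr).1)⟩
  have bgq_le : IsBoundedUnder (· ≤ ·) (nhdsWithin (0:ℝ) (Set.Ioi 0)) (fun s => g (4⁻¹ * s)) :=
    ⟨M₁, Filter.eventually_map.2 (hgqb.mono fun r hr => (abs_le.1 hr).2)⟩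
  have bgq_ge : IsBoundedUnder (· ≥ ·) (nhdsWithin (0:ℝ) (Set.Ioi 0)) (fun s => g (4⁻¹ * s)) :=
    ⟨-M₁, Filter.eventually_map.2 (hgqb.mono fun r hr => (abs_le.1 hr).1)⟩
  have emap : Filter.limsup (fun s => g (4⁻¹ * s)) (nhdsWithin (0:ℝ) (Set.Ioi 0)) =
      Filter.limsup g (nhdsWithin (0:ℝ) (Set.Ioi 0)) := by
    rw [show (fun s : ℝ => g (4⁻¹ * s)) = g ∘ (fun s : ℝ => 4⁻¹ * s) from rfl,
      Filter.limsup_comp, BLC_quarter_map]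
  have fmap : Filter.liminf (fun s => g (4⁻¹ * s)) (nhdsWithin (0:ℝ) (Set.Ioi 0)) =
      Filter.liminf g (nhdsWithin (0:ℝ) (Set.Ioi 0)) := by
    rw [show (fun s : ℝ => g (4⁻¹ * s)) = g ∘ (fun s : ℝ => 4⁻¹ * s) from rfl,
      Filter.liminf_comp, BLC_quarter_map]
  have e1 : Filter.limsup g (nhdsWithin (0:ℝ) (Set.Ioi 0)) ≤
      Filter.limsup h (nhdsWithin (0:ℝ) (Set.Ioi 0)) :=
    Filter.limsup_le_limsup hle bg_ge.isCoboundedUnder_le bh_le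
  have f1 : Filter.liminf g (nhdsWithin (0:ℝ) (Set.Ioi 0)) ≤
      Filter.liminf h (nhdsWithin (0:ℝ) (Set.Ioi 0)) :=
    Filter.liminf_le_liminf hle bg_ge bh_le.isCoboundedUnder_ge
  have e2 : ∀ ε > (0:ℝ), Filter.limsup h (nhdsWithin (0:ℝ) (Set.Ioi 0)) ≤
      Filter.limsup g (nhdsWithin (0:ℝ) (Set.Ioi 0)) + ε := by
    intro ε hε
    have h1 : Filter.limsup h (nhdsWithin (0:ℝ) (Set.Ioi 0)) ≤
        Filter.limsup (fun s => g (4⁻¹ * s) + ε) (nhdsWithin (0:ℝ) (Set.Ioi 0)) :=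
      Filter.limsup_le_limsup (hq ε hε) bh_ge.isCoboundedUnder_le
        ⟨M₁ + ε, Filter.eventually_map.2 (hgqb.mono fun s hs => by
          have := (abs_le.1 hs).2; linarith)⟩
    have h2 : Filter.limsup (fun s => g (4⁻¹ * s) + ε) (nhdsWithin (0:ℝ) (Set.Ioi 0)) =
        Filter.limsup (fun s => g (4⁻¹ * s)) (nhdsWithin (0:ℝ) (Set.Ioi 0)) + ε :=
      limsup_add_const _ _ ε bgq_le bgq_ge.isCoboundedUnder_le
    rw [h2, emap] at h1
    exact h1
  have f2 : ∀ ε > (0:ℝ), Filter.liminf h (nhdsWithin (0:ℝ) (Set.Ioi 0)) ≤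
      Filter.liminf g (nhdsWithin (0:ℝ) (Set.Ioi 0)) + ε := by
    intro ε hε
    have h1 : Filter.liminf h (nhdsWithin (0:ℝ) (Set.Ioi 0)) ≤
        Filter.liminf (fun s => g (4⁻¹ * s) + ε) (nhdsWithin (0:ℝ) (Set.Ioi 0)) :=
      Filter.liminf_le_liminf (hq ε hε) bh_ge
        (IsBoundedUnder.isCoboundedUnder_ge
          ⟨M₁ + ε, Filter.eventually_map.2 (hgqb.mono fun s hs => by
            have := (abs_le.1 hs).2; linarith)⟩)
    have h2 : Filter.liminf (fun s => g (4⁻¹ * s) + ε) (nhdsWithin (0:ℝ) (Set.Ioi 0)) =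
        Filter.liminf (fun s => g (4⁻¹ * s)) (nhdsWithin (0:ℝ) (Set.Ioi 0)) + ε :=
      liminf_add_const _ _ ε bgq_le.isCoboundedUnder_ge bgq_ge
    rw [h2, fmap] at h1
    exact h1
  constructor
  · exact le_antisymm e1 (le_of_forall_sub_le fun ε hε => by linarith [e2 ε hε])
  · exact le_antisymm f1 (le_of_forall_sub_le fun ε hε => by linarith [f2 ε hε])

section MeasureAux

variable {X : Type*} [MetricSpace X] [MeasurableSpace X] [OpensMeasurableSpace X]

private lemma BLC_measurable (μ : Measure X) (r : ℝ) :
    Measurable fun x => (μ (Metric.ball x r)).toReal := by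
  apply Measurable.ennreal_toReal
  rcases le_or_gt r 0 with hr | hr
  · have : (fun x : X => μ (Metric.ball x r)) = fun _ => 0 := by
      funext x; rw [Metric.ball_eq_empty.2 hr, measure_empty]
    rw [this]; exact measurable_const
  · have lsc : LowerSemicontinuous fun x : X => μ (Metric.ball x r) := by
      intro x c hc
      have hU : Metric.ball x r = ⋃ n : ℕ, Metric.ball x (r - r / (n+1)) := by
        ext y
        simp only [Set.mem_iUnion, Metric.mem_ball]
        constructor
        · intro hy
          obtain ⟨n, hn⟩ := exists_nat_one_div_lt (div_pos (sub_pos.2 hy) hr)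
          refine ⟨n, ?_⟩
          have h2 : r / (n+1) < r - dist y x := by
            have h3 := mul_lt_mul_of_pos_left hn hr
            rw [mul_one_div] at h3
            have h4 : r * ((r - dist y x)/r) = r - dist y x := by field_simp
            linarith
          linarith
        · rintro ⟨n, hn⟩
          have : 0 < r / ((n:ℝ)+1) := by positivity
          linarith
      have hmono : Monotone fun n : ℕ => Metric.ball x (r - r / (n+1)) := by
        intro n m hnm
        apply Metric.ball_subset_ball
        have : r / ((m:ℝ)+1) ≤ r / ((n:ℝ)+1) := by
          apply div_le_div_of_nonneg_left hr.le (by positivity)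
          exact_mod_cast by omega
        linarith
      have hdir := hmono.directed_le
      have hiSup : μ (⋃ n : ℕ, Metric.ball x (r - r / (n+1))) =
          ⨆ n : ℕ, μ (Metric.ball x (r - r / (n+1))) := hdir.measure_iUnion
      have hc' : c < μ (Metric.ball x r) := hc
      rw [hU, hiSup, lt_iSup_iff] at hc'
      obtain ⟨n, hn⟩ := hc'
      have hpos : 0 < r / ((n:ℝ)+1) := by positivity
      filter_upwards [Metric.ball_mem_nhds x hpos] with y hy
      refine hn.trans_le (measure_mono ?_)
      intro z hz
      rw [Metric.mem_ball] at hz hy ⊢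
      have := dist_triangle z x y
      have := dist_comm x y
      calc dist z y ≤ dist z x + dist x y := dist_triangle z x y
        _ = dist z x + dist y x := by rw [dist_comm x y]
        _ < (r - r/(n+1)) + r/(n+1) := by exact add_lt_add hz hy
        _ = r := by ring
    exact lsc.measurable

private lemma BLC_toReal_le_one (μ : Measure X) [IsProbabilityMeasure μ] (s : Set X) :
    (μ s).toReal ≤ 1 := by
  have h := prob_le_one (μ := μ) (s := s)
  have := ENNReal.toReal_mono (by simp) h
  simpa using this

private lemma BLC_integrable (μ : Measure X) [IsProbabilityMeasure μ] (r : ℝ) :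
    Integrable (fun x => (μ (Metric.ball x r)).toReal) μ := by
  refine Integrable.mono' (integrable_const (1:ℝ))
    (BLC_measurable μ r).aestronglyMeasurable ?_
  filter_upwards with x
  rw [Real.norm_eq_abs, abs_of_nonneg ENNReal.toReal_nonneg]
  exact BLC_toReal_le_one μ _

private lemma BLC_key1 (μ : Measure X) [IsProbabilityMeasure μ]
    (k : ℝ → ℕ) (pts : ∀ r : ℝ, Fin (k r) → X)
    (hcover : ∀ r > (0 : ℝ), ∀ x : X, ∃ p : Fin (k r), dist x (pts r p) < r)
    {r : ℝ} (hr : 0 < r) :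
    (∫ x, (μ (Metric.ball x r)).toReal ∂μ) ≤
      ∑ p : Fin (k r), (μ (Metric.ball (pts r p) (2 * r))).toReal ^ 2 := by
  have hint : ∀ p : Fin (k r), Integrable
      ((Metric.ball (pts r p) r).indicator
        (fun _ => (μ (Metric.ball (pts r p) (2*r))).toReal)) μ :=
    fun p => (integrable_const _).indicator Metric.isOpen_ball.measurableSet
  have hle : (∫ x, (μ (Metric.ball x r)).toReal ∂μ) ≤
      ∫ x, (∑ p : Fin (k r), (Metric.ball (pts r p) r).indicator
        (fun _ => (μ (Metric.ball (pts r p) (2*r))).toReal) x) ∂μ := by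
    refine integral_mono_of_nonneg (Filter.Eventually.of_forall fun x => ENNReal.toReal_nonneg)
      (integrable_finset_sum _ fun p _ => hint p) (Filter.Eventually.of_forall fun x => ?_)
    obtain ⟨p, hp⟩ := hcover r hr x
    have hsub : Metric.ball x r ⊆ Metric.ball (pts r p) (2*r) := by
      intro z hz
      rw [Metric.mem_ball] at hz ⊢
      calc dist z (pts r p) ≤ dist z x + dist x (pts r p) := dist_triangle _ _ _
        _ < r + r := add_lt_add hz hp
        _ = 2*r := by ring
    calc (μ (Metric.ball x r)).toReal
        ≤ (μ (Metric.ball (pts r p) (2*r))).toReal :=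
          ENNReal.toReal_mono (measure_ne_top _ _) (measure_mono hsub)
      _ = (Metric.ball (pts r p) r).indicator
            (fun _ => (μ (Metric.ball (pts r p) (2*r))).toReal) x := by
          rw [Set.indicator_of_mem (Metric.mem_ball.2 hp)]
      _ ≤ ∑ q : Fin (k r), (Metric.ball (pts r q) r).indicator
            (fun _ => (μ (Metric.ball (pts r q) (2*r))).toReal) x :=
          Finset.single_le_sum
            (f := fun q : Fin (k r) => (Metric.ball (pts r q) r).indicator
              (fun _ => (μ (Metric.ball (pts r q) (2*r))).toReal) x)
            (fun q _ => Set.indicator_nonneg (fun _ _ => ENNReal.toReal_nonneg) x)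
            (Finset.mem_univ p)
  rw [integral_finset_sum _ (fun p _ => hint p)] at hle
  refine hle.trans (Finset.sum_le_sum fun p _ => ?_)
  rw [integral_indicator_const _ Metric.isOpen_ball.measurableSet, smul_eq_mul, sq]
  exact mul_le_mul_of_nonneg_right
    (ENNReal.toReal_mono (measure_ne_top _ _)
      (measure_mono (Metric.ball_subset_ball (by linarith))))
    ENNReal.toReal_nonneg

private lemma BLC_key2 (μ : Measure X) [IsProbabilityMeasure μ]
    (C₀ : ℕ) (k : ℝ → ℕ) (pts : ∀ r : ℝ, Fin (k r) → X)
    (hmult : ∀ r > (0 : ℝ), ∀ x : X,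
      ((Finset.univ : Finset (Fin (k r))).filter
        (fun p => dist x (pts r p) < 2 * r)).card ≤ C₀)
    {r : ℝ} (hr : 0 < r) :
    (∑ p : Fin (k r), (μ (Metric.ball (pts r p) (2 * r))).toReal ^ 2) ≤
      (C₀ : ℝ) * ∫ x, (μ (Metric.ball x (4*r))).toReal ∂μ := by
  have hint : ∀ p : Fin (k r), Integrable
      ((Metric.ball (pts r p) (2*r)).indicator
        (fun _ => (μ (Metric.ball (pts r p) (2*r))).toReal)) μ :=
    fun p => (integrable_const _).indicator Metric.isOpen_ball.measurableSet
  have heq : ∀ p : Fin (k r), (μ (Metric.ball (pts r p) (2*r))).toReal ^ 2 =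
      ∫ x, (Metric.ball (pts r p) (2*r)).indicator
        (fun _ => (μ (Metric.ball (pts r p) (2*r))).toReal) x ∂μ := by
    intro p
    rw [integral_indicator_const _ Metric.isOpen_ball.measurableSet, smul_eq_mul, sq]; rfl
  calc (∑ p : Fin (k r), (μ (Metric.ball (pts r p) (2 * r))).toReal ^ 2)
      = ∫ x, (∑ p : Fin (k r), (Metric.ball (pts r p) (2*r)).indicator
          (fun _ => (μ (Metric.ball (pts r p) (2*r))).toReal) x) ∂μ := by
        rw [integral_finset_sum _ (fun p _ => hint p)]
        exact Finset.sum_congr rfl fun p _ => heq p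
    _ ≤ ∫ x, (C₀ : ℝ) * (μ (Metric.ball x (4*r))).toReal ∂μ := by
        refine integral_mono_of_nonneg
          (Filter.Eventually.of_forall fun x => Finset.sum_nonneg fun p _ =>
            Set.indicator_nonneg (fun _ _ => ENNReal.toReal_nonneg) x)
          ((BLC_integrable μ (4*r)).const_mul _)
          (Filter.Eventually.of_forall fun x => ?_)
        have hterm : ∀ p : Fin (k r),
            (Metric.ball (pts r p) (2*r)).indicator
              (fun _ => (μ (Metric.ball (pts r p) (2*r))).toReal) x ≤
            (if dist x (pts r p) < 2*r then (μ (Metric.ball x (4*r))).toReal else 0) := by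
          intro p
          by_cases hx : dist x (pts r p) < 2*r
          · rw [Set.indicator_of_mem (Metric.mem_ball.2 hx), if_pos hx]
            refine ENNReal.toReal_mono (measure_ne_top _ _) (measure_mono ?_)
            intro z hz
            rw [Metric.mem_ball] at hz ⊢
            calc dist z x ≤ dist z (pts r p) + dist (pts r p) x := dist_triangle _ _ _
              _ < 2*r + 2*r := add_lt_add hz (by rw [dist_comm]; exact hx)
              _ = 4*r := by ring
          · rw [Set.indicator_of_notMem (fun hmem => hx (Metric.mem_ball.1 hmem)), if_neg hx]
        calc (∑ p : Fin (k r), (Metric.ball (pts r p) (2*r)).indicator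
              (fun _ => (μ (Metric.ball (pts r p) (2*r))).toReal) x)
            ≤ ∑ p : Fin (k r), (if dist x (pts r p) < 2*r
                then (μ (Metric.ball x (4*r))).toReal else 0) :=
              Finset.sum_le_sum fun p _ => hterm p
          _ = ((Finset.univ : Finset (Fin (k r))).filter
                (fun p => dist x (pts r p) < 2 * r)).card •
                (μ (Metric.ball x (4*r))).toReal := by
              rw [← Finset.sum_filter, Finset.sum_const]
          _ ≤ (C₀ : ℝ) * (μ (Metric.ball x (4*r))).toReal := by
              rw [nsmul_eq_mul]
              exact mul_le_mul_of_nonneg_right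
                (Nat.cast_le.2 (hmult r hr x)) ENNReal.toReal_nonneg
    _ = (C₀ : ℝ) * ∫ x, (μ (Metric.ball x (4*r))).toReal ∂μ := integral_const_mul _ _

private lemma BLC_key3 (μ : Measure X) [IsProbabilityMeasure μ]
    (k : ℝ → ℕ) (pts : ∀ r : ℝ, Fin (k r) → X)
    (hcover : ∀ r > (0 : ℝ), ∀ x : X, ∃ p : Fin (k r), dist x (pts r p) < r)
    {r : ℝ} (hr : 0 < r) :
    (1:ℝ) ≤ (k r : ℝ) * ∑ p : Fin (k r), (μ (Metric.ball (pts r p) (2 * r))).toReal ^ 2 := by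
  have hcov : (Set.univ : Set X) ⊆ ⋃ p : Fin (k r), Metric.ball (pts r p) (2*r) := by
    intro x _
    obtain ⟨p, hp⟩ := hcover r hr x
    exact Set.mem_iUnion.2 ⟨p, Metric.mem_ball.2 (by linarith)⟩
  have h1 : (1:ℝ≥0∞) ≤ ∑ p : Fin (k r), μ (Metric.ball (pts r p) (2*r)) := by
    calc (1:ℝ≥0∞) = μ Set.univ := (measure_univ).symm
      _ ≤ μ (⋃ p : Fin (k r), Metric.ball (pts r p) (2*r)) := measure_mono hcov
      _ ≤ ∑ p : Fin (k r), μ (Metric.ball (pts r p) (2*r)) := measure_iUnion_fintype_le μ _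
  have h2 : (1:ℝ) ≤ ∑ p : Fin (k r), (μ (Metric.ball (pts r p) (2*r))).toReal := by
    have hne : (∑ p : Fin (k r), μ (Metric.ball (pts r p) (2*r))) ≠ ⊤ :=
      (ENNReal.sum_lt_top.2 fun p _ => measure_lt_top _ _).ne
    have := ENNReal.toReal_mono hne h1
    rwa [ENNReal.toReal_one, ENNReal.toReal_sum (fun p _ => measure_ne_top _ _)] at this
  have h3 := sq_sum_le_card_mul_sum_sq
    (s := (Finset.univ : Finset (Fin (k r))))
    (f := fun p => (μ (Metric.ball (pts r p) (2*r))).toReal)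
  rw [Finset.card_univ, Fintype.card_fin] at h3
  nlinarith [h2, h3]

end MeasureAux

set_option maxHeartbeats 2000000 in
/-- In a metric space with bounded local complexity, for a probability
measure `μ`, the limsup (resp. liminf) as `r → 0⁺` of
`log ∑_p (∫ 𝟙_{p,r} dμ)² / log r` equals `D̄₂(μ)` (resp. `D̲₂(μ)`); in particular for any
`ε > 0` there is `r₀ > 0` such that
`r^{D̄₂+ε} ≤ ∑_p (∫ 𝟙_{p,r} dμ)² ≤ r^{D̲₂−ε}` for all `0 < r < r₀`. -/
theorem bounded_local_complexity_correlation_sum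
    {X : Type*} [MetricSpace X] [MeasurableSpace X] [OpensMeasurableSpace X]
    (μ : Measure X) [IsProbabilityMeasure μ]
    (C₀ : ℕ) (k : ℝ → ℕ) (pts : ∀ r : ℝ, Fin (k r) → X)
    (hcover : ∀ r > (0 : ℝ), ∀ x : X, ∃ p : Fin (k r), dist x (pts r p) < r)
    (hmult : ∀ r > (0 : ℝ), ∀ x : X,
      ((Finset.univ : Finset (Fin (k r))).filter
        (fun p => dist x (pts r p) < 2 * r)).card ≤ C₀) :
    Filter.limsup
        (fun r : ℝ =>
          Real.log (∑ p : Fin (k r), (μ (Metric.ball (pts r p) (2 * r))).toReal ^ 2) /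
            Real.log r)
        (nhdsWithin 0 (Set.Ioi 0)) = corrUpper μ ∧
    Filter.liminf
        (fun r : ℝ =>
          Real.log (∑ p : Fin (k r), (μ (Metric.ball (pts r p) (2 * r))).toReal ^ 2) /
            Real.log r)
        (nhdsWithin 0 (Set.Ioi 0)) = corrLower μ ∧
    ∀ ε > (0 : ℝ), ∃ r₀ > (0 : ℝ), ∀ r : ℝ, 0 < r → r < r₀ →
      r ^ (corrUpper μ + ε) ≤
          (∑ p : Fin (k r), (μ (Metric.ball (pts r p) (2 * r))).toReal ^ 2) ∧
        (∑ p : Fin (k r), (μ (Metric.ball (pts r p) (2 * r))).toReal ^ 2) ≤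
          r ^ (corrLower μ - ε) := by
  classical
  have hne : Nonempty X := by
    by_contra hempty
    have huniv : (Set.univ : Set X) = ∅ := Set.univ_eq_empty_iff.2 (not_nonempty_iff.1 hempty)
    have h1 : μ Set.univ = 1 := measure_univ
    rw [huniv, measure_empty] at h1
    exact zero_ne_one h1
  obtain ⟨x₀⟩ := hne
  set l : Filter ℝ := nhdsWithin (0:ℝ) (Set.Ioi 0) with hldef
  have hC₀1 : 1 ≤ C₀ := by
    obtain ⟨p, hp⟩ := hcover 1 one_pos x₀
    refine le_trans ?_ (hmult 1 one_pos x₀)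
    have hmem : p ∈ (Finset.univ : Finset (Fin (k 1))).filter
        (fun q => dist x₀ (pts 1 q) < 2*1) :=
      Finset.mem_filter.2 ⟨Finset.mem_univ _, by linarith⟩
    exact Finset.card_pos.2 ⟨p, hmem⟩
  have hC₀R : (1:ℝ) ≤ (C₀:ℝ) := by exact_mod_cast hC₀1
  have hC₀pos : (0:ℝ) < (C₀:ℝ) := lt_of_lt_of_le one_pos hC₀R
  have hkpos : ∀ r : ℝ, 0 < r → 0 < k r := by
    intro r hr
    obtain ⟨p, -⟩ := hcover r hr x₀
    exact p.pos
  have hk1 : 0 < k 1 := hkpos 1 one_pos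
  have hFinNe : (Finset.univ : Finset (Fin (k 1))).Nonempty := ⟨⟨0, hk1⟩, Finset.mem_univ _⟩
  set D : ℝ := Finset.univ.sup' hFinNe (fun p : Fin (k 1) => dist x₀ (pts 1 p)) with hD
  have hD0 : 0 ≤ D := le_trans dist_nonneg (Finset.le_sup' (fun p : Fin (k 1) => dist x₀ (pts 1 p)) (Finset.mem_univ (⟨0, hk1⟩ : Fin (k 1))))
  set B : ℝ := D + 2 with hB
  have hB1 : 1 ≤ B := by rw [hB]; linarith
  have hB0 : 0 < B := by linarith
  have hBall : ∀ x : X, dist x₀ x < B := by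
    intro x
    obtain ⟨p, hp⟩ := hcover 1 one_pos x
    have h1 : dist x₀ (pts 1 p) ≤ D := Finset.le_sup' (fun q : Fin (k 1) => dist x₀ (pts 1 q)) (Finset.mem_univ p)
    calc dist x₀ x ≤ dist x₀ (pts 1 p) + dist (pts 1 p) x := dist_triangle _ _ _
      _ = dist x₀ (pts 1 p) + dist x (pts 1 p) := by rw [dist_comm (pts 1 p) x]
      _ < D + 1 := by linarith
      _ < B := by rw [hB]; linarith
  have hkB : ∀ s : ℝ, B ≤ s → k s ≤ C₀ := by
    intro s hs
    have hs0 : 0 < s := lt_of_lt_of_le hB0 hs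
    have h := hmult s hs0 x₀
    have hall : (Finset.univ : Finset (Fin (k s))).filter (fun p => dist x₀ (pts s p) < 2*s)
        = Finset.univ := by
      apply Finset.filter_true_of_mem
      intro p _
      calc dist x₀ (pts s p) < B := hBall _
        _ ≤ s := hs
        _ < 2*s := by linarith
    rw [hall, Finset.card_univ, Fintype.card_fin] at h
    exact h
  have hkrec : ∀ r : ℝ, 0 < r → k r ≤ C₀ * k (2*r) := by
    intro r hr
    have h2r : 0 < 2*r := by linarith
    have hexq : ∀ p : Fin (k r), ∃ q : Fin (k (2*r)), dist (pts r p) (pts (2*r) q) < 2*r :=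
      fun p => hcover (2*r) h2r (pts r p)
    choose f hf using hexq
    have hcard := Finset.card_le_mul_card_image_of_maps_to
      (f := f) (s := Finset.univ) (t := Finset.univ) (fun a _ => Finset.mem_univ _) C₀ ?_
    · simpa [Finset.card_univ] using hcard
    · intro q _
      refine le_trans (Finset.card_le_card ?_) (hmult r hr (pts (2*r) q))
      intro p hp
      simp only [Finset.mem_filter, Finset.mem_univ, true_and] at hp ⊢
      rw [← hp, dist_comm]
      exact hf p
  have hkpow : ∀ n : ℕ, ∀ r : ℝ, 0 < r → B ≤ 2^n * r → k r ≤ C₀^(n+1) := by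
    intro n
    induction n with
    | zero =>
      intro r hr h
      simpa using hkB r (by simpa using h)
    | succ n ih =>
      intro r hr h
      have h2 : k (2*r) ≤ C₀^(n+1) := ih (2*r) (by linarith) (by
        calc B ≤ 2^(n+1) * r := h
          _ = 2^n * (2*r) := by ring)
      calc k r ≤ C₀ * k (2*r) := hkrec r hr
        _ ≤ C₀ * C₀^(n+1) := Nat.mul_le_mul_left _ h2
        _ = C₀^(n+1+1) := by rw [pow_succ]; ring
  set M : ℝ := (2*Real.log C₀ + Real.log 2)/Real.log 2 with hM
  have hl2 : 0 < Real.log 2 := Real.log_pos (by norm_num)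
  have hlc : 0 ≤ Real.log C₀ := Real.log_nonneg hC₀R
  have hM0 : 0 < M := by rw [hM]; apply div_pos (by linarith) hl2
  have hlogk : ∀ᶠ r in l, Real.log (k r) ≤ M * (-Real.log r) := by
    have hδ : (0:ℝ) < 1/(4*B) := by positivity
    refine Filter.eventually_of_mem
      ((Ioo_mem_nhdsGT hδ : Set.Ioo (0:ℝ) (1/(4*B)) ∈ l)) ?_
    rintro r ⟨hr0, hrδ⟩
    have hrB : r < B := by
      refine lt_of_lt_of_le hrδ ?_
      rw [div_le_iff₀ (by positivity)]
      nlinarith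
    have hr1 : r < 1 := by
      refine lt_of_lt_of_le hrδ ?_
      rw [div_le_one (by positivity)]
      nlinarith
    have hlr : Real.log r < 0 := Real.log_neg hr0 hr1
    set n : ℕ := ⌈Real.logb 2 (B/r)⌉₊ with hn
    have hBr1 : 1 < B / r := (one_lt_div hr0).2 hrB
    have h2n : B / r ≤ (2:ℝ)^(n:ℝ) :=
      (Real.logb_le_iff_le_rpow (by norm_num) (by positivity)).1 (Nat.le_ceil _)
    have hBle : B ≤ 2^n * r := by
      rw [Real.rpow_natCast] at h2n
      calc B = (B/r) * r := by field_simp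
        _ ≤ (2:ℝ)^n * r := mul_le_mul_of_nonneg_right h2n hr0.le
    have hkn : k r ≤ C₀^(n+1) := hkpow n r hr0 hBle
    have hkr1 : (1:ℝ) ≤ (k r : ℝ) := by exact_mod_cast hkpos r hr0
    have hlog1 : Real.log (k r) ≤ ((n:ℝ)+1) * Real.log C₀ := by
      calc Real.log (k r) ≤ Real.log ((C₀:ℝ)^(n+1)) := by
            apply (Real.log_le_log_iff (by linarith) (by positivity)).2
            exact_mod_cast hkn
        _ = ((n:ℝ)+1) * Real.log C₀ := by rw [Real.log_pow]; push_cast; ring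
    have hlogb0 : 0 ≤ Real.logb 2 (B/r) := (Real.logb_pos (by norm_num) hBr1).le
    have hceil : (n:ℝ) < Real.logb 2 (B/r) + 1 := Nat.ceil_lt_add_one hlogb0
    have hlogB : 0 ≤ Real.log B := Real.log_nonneg hB1
    have hbound : Real.log B + 2*Real.log 2 ≤ -Real.log r := by
      have h5 : Real.log r ≤ Real.log (1/(4*B)) :=
        (Real.log_le_log_iff hr0 hδ).2 hrδ.le
      rw [one_div, Real.log_inv, Real.log_mul (by norm_num) (ne_of_gt hB0),
        show Real.log 4 = 2*Real.log 2 by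
          rw [show (4:ℝ) = 2^2 by norm_num, Real.log_pow]; push_cast; ring] at h5
      linarith
    have hnum : (Real.log B + (-Real.log r) + 2*Real.log 2) * Real.log C₀ ≤
        (2*Real.log C₀ + Real.log 2) * (-Real.log r) := by
      nlinarith [mul_le_mul_of_nonneg_left hbound hlc,
        mul_nonneg hl2.le (by linarith : (0:ℝ) ≤ -Real.log r)]
    rw [hM, div_mul_eq_mul_div, le_div_iff₀ hl2]
    have hXu : Real.log (k r) ≤ (Real.logb 2 (B/r) + 2) * Real.log C₀ := by
      refine le_trans hlog1 ?_
      apply mul_le_mul_of_nonneg_right _ hlc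
      linarith
    have hexpand : (Real.logb 2 (B/r)) * Real.log 2 = Real.log B - Real.log r := by
      rw [Real.logb, div_mul_cancel₀ _ (ne_of_gt hl2),
        Real.log_div (ne_of_gt hB0) (ne_of_gt hr0)]
    calc Real.log (k r) * Real.log 2
        ≤ ((Real.logb 2 (B/r) + 2) * Real.log C₀) * Real.log 2 :=
          mul_le_mul_of_nonneg_right hXu hl2.le
      _ = (Real.log B + (-Real.log r) + 2*Real.log 2) * Real.log C₀ := by
          linear_combination Real.log C₀ * hexpand
      _ ≤ (2*Real.log C₀ + Real.log 2) * (-Real.log r) := hnum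
  -- the two main functions
  set If : ℝ → ℝ := fun r => ∫ x, (μ (Metric.ball x r)).toReal ∂μ with hIfdef
  set Sf : ℝ → ℝ :=
    (fun r => ∑ p : Fin (k r), (μ (Metric.ball (pts r p) (2 * r))).toReal ^ 2) with hSfdef
  have hkey3 : ∀ r : ℝ, 0 < r → (1:ℝ) ≤ (k r : ℝ) * Sf r :=
    fun r hr => BLC_key3 μ k pts hcover hr
  have hSpos : ∀ r : ℝ, 0 < r → 0 < Sf r := by
    intro r hr
    by_contra hle
    push_neg at hle
    have hkr : (0:ℝ) ≤ (k r:ℝ) := Nat.cast_nonneg _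
    nlinarith [hkey3 r hr]
  have hkey1 : ∀ r : ℝ, 0 < r → If r ≤ Sf r := fun r hr => BLC_key1 μ k pts hcover hr
  have hkey2 : ∀ r : ℝ, 0 < r → Sf r ≤ (C₀:ℝ) * If (4*r) :=
    fun r hr => BLC_key2 μ C₀ k pts hmult hr
  have hIle1 : ∀ r : ℝ, If r ≤ 1 := by
    intro r
    have h1 : If r ≤ ∫ _x, (1:ℝ) ∂μ :=
      integral_mono_of_nonneg (Filter.Eventually.of_forall fun x => ENNReal.toReal_nonneg)
        (integrable_const 1) (Filter.Eventually.of_forall fun x => BLC_toReal_le_one μ _)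
    simpa using h1
  have hscale : ∀ s : ℝ, 0 < s → Sf (4⁻¹*s) ≤ (C₀:ℝ) * If s := by
    intro s hs
    have h := hkey2 (4⁻¹*s) (by positivity)
    rwa [show 4*(4⁻¹*s) = s by ring] at h
  have hIpos : ∀ s : ℝ, 0 < s → 0 < If s := by
    intro s hs
    have h := hscale s hs
    have h2 := hSpos (4⁻¹*s) (by positivity)
    nlinarith
  have hSleC : ∀ r : ℝ, 0 < r → Sf r ≤ (C₀:ℝ) := by
    intro r hr
    calc Sf r ≤ (C₀:ℝ) * If (4*r) := hkey2 r hr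
      _ ≤ (C₀:ℝ) * 1 := mul_le_mul_of_nonneg_left (hIle1 _) hC₀pos.le
      _ = (C₀:ℝ) := mul_one _
  have hSlog_lb : ∀ r : ℝ, 0 < r → -Real.log (k r) ≤ Real.log (Sf r) := by
    intro r hr
    have hkr : (0:ℝ) < (k r:ℝ) := by exact_mod_cast hkpos r hr
    have h1 : ((k r:ℝ))⁻¹ ≤ Sf r := by
      rw [inv_eq_one_div, div_le_iff₀ hkr]
      nlinarith [hkey3 r hr]
    calc -Real.log (k r) = Real.log ((k r:ℝ))⁻¹ := (Real.log_inv _).symm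
      _ ≤ Real.log (Sf r) := (Real.log_le_log_iff (by positivity) (hSpos r hr)).2 h1
  have hSlog_ub : ∀ r : ℝ, 0 < r → Real.log (Sf r) ≤ Real.log C₀ :=
    fun r hr => (Real.log_le_log_iff (hSpos r hr) hC₀pos).2 (hSleC r hr)
  have hIlog_ub : ∀ r : ℝ, 0 < r → Real.log (If r) ≤ 0 :=
    fun r hr => Real.log_nonpos (hIpos r hr).le (hIle1 r)
  have hIlog_lb : ∀ s : ℝ, 0 < s →
      Real.log (Sf (4⁻¹*s)) - Real.log C₀ ≤ Real.log (If s) := by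
    intro s hs
    have hS4 : 0 < Sf (4⁻¹*s) := hSpos _ (by positivity)
    have h1 : Sf (4⁻¹*s)/(C₀:ℝ) ≤ If s := by
      rw [div_le_iff₀ hC₀pos]
      calc Sf (4⁻¹*s) ≤ (C₀:ℝ) * If s := hscale s hs
        _ = If s * (C₀:ℝ) := mul_comm _ _
    calc Real.log (Sf (4⁻¹*s)) - Real.log C₀ = Real.log (Sf (4⁻¹*s)/(C₀:ℝ)) :=
        (Real.log_div (ne_of_gt hS4) (ne_of_gt hC₀pos)).symm
      _ ≤ Real.log (If s) :=
        (Real.log_le_log_iff (div_pos hS4 hC₀pos) (hIpos s hs)).2 h1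
  -- the quotient functions
  set g : ℝ → ℝ := fun r => Real.log (Sf r) / Real.log r with hgdef
  set h : ℝ → ℝ := fun r => Real.log (If r) / Real.log r with hhdef
  have hcorrU : corrUpper μ = Filter.limsup h l := rfl
  have hcorrL : corrLower μ = Filter.liminf h l := rfl
  have l4pos : 0 < Real.log 4 := Real.log_pos (by norm_num)
  set M₁ : ℝ := M + M * Real.log 4 + Real.log C₀ + 1 with hM₁
  have hlogkq : ∀ᶠ s in l, Real.log (k (4⁻¹*s)) ≤ M * (-Real.log (4⁻¹*s)) := by
    have h0 : ∀ᶠ r in Filter.map (fun s : ℝ => 4⁻¹ * s) l,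
        Real.log (k r) ≤ M * (-Real.log r) := by
      rw [hldef, BLC_quarter_map]
      exact hldef ▸ hlogk
    exact Filter.eventually_map.1 h0
  have hsmall : ∀ δ : ℝ, 0 < δ → ∀ᶠ r in l, r ∈ Set.Ioo 0 δ := by
    intro δ hδ
    exact Filter.eventually_of_mem
      (Ioo_mem_nhdsGT hδ : Set.Ioo (0:ℝ) δ ∈ l) (fun x hx => hx)
  have hgb : ∀ᶠ r in l, |g r| ≤ M₁ := by
    filter_upwards [hsmall (Real.exp (-1)) (Real.exp_pos _), hlogk] with r hr hkr
    obtain ⟨hr0, hre⟩ := hr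
    have hT1 : 1 ≤ -Real.log r := by
      have h6 := Real.log_lt_log hr0 hre
      rw [Real.log_exp] at h6
      linarith
    have habs : |Real.log (Sf r) / (-(-Real.log r))| ≤ M₁ := by
      apply BLC_abs_div hT1
      · calc Real.log (Sf r) ≤ Real.log C₀ := hSlog_ub r hr0
          _ ≤ M₁ := by
            rw [hM₁]
            nlinarith [mul_nonneg hM0.le l4pos.le]
      · have hMM : M * (-Real.log r) ≤ M₁ * (-Real.log r) := by
          apply mul_le_mul_of_nonneg_right _ (by linarith : (0:ℝ) ≤ -Real.log r)
          rw [hM₁]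
          nlinarith [mul_nonneg hM0.le l4pos.le]
        calc -(M₁ * (-Real.log r)) ≤ -(M * (-Real.log r)) := neg_le_neg hMM
          _ ≤ -Real.log (k r) := neg_le_neg hkr
          _ ≤ Real.log (Sf r) := hSlog_lb r hr0
    rw [show (-(-Real.log r)) = Real.log r by ring] at habs
    exact habs
  have hhb : ∀ᶠ r in l, |h r| ≤ M₁ := by
    filter_upwards [hsmall (Real.exp (-1)) (Real.exp_pos _), hlogkq] with r hr hkq
    obtain ⟨hr0, hre⟩ := hr
    have hT1 : 1 ≤ -Real.log r := by
      have h6 := Real.log_lt_log hr0 hre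
      rw [Real.log_exp] at h6
      linarith
    have hlog4r : Real.log (4⁻¹*r) = -Real.log 4 + Real.log r := by
      rw [Real.log_mul (by norm_num) (ne_of_gt hr0), Real.log_inv]
    have h3 : -Real.log (4⁻¹*r) = (-Real.log r) + Real.log 4 := by rw [hlog4r]; ring
    rw [h3] at hkq
    have hlb : -(M₁ * (-Real.log r)) ≤ Real.log (If r) := by
      have h1 := hIlog_lb r hr0
      have h2 := hSlog_lb (4⁻¹*r) (by positivity)
      rw [hM₁]
      nlinarith [mul_le_mul_of_nonneg_left hT1 (mul_nonneg hM0.le l4pos.le),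
        mul_le_mul_of_nonneg_left hT1 hlc]
    have habs : |Real.log (If r) / (-(-Real.log r))| ≤ M₁ := by
      apply BLC_abs_div hT1 _ hlb
      calc Real.log (If r) ≤ 0 := hIlog_ub r hr0
        _ ≤ M₁ := by
          rw [hM₁]
          nlinarith [mul_nonneg hM0.le l4pos.le]
    rw [show (-(-Real.log r)) = Real.log r by ring] at habs
    exact habs
  have hF1 : ∀ᶠ r in l, g r ≤ h r := by
    filter_upwards [hsmall 1 one_pos] with r hr
    obtain ⟨hr0, hr1⟩ := hr
    have hlogr : Real.log r < 0 := Real.log_neg hr0 hr1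
    exact BLC_div_le_div_neg
      ((Real.log_le_log_iff (hIpos r hr0) (hSpos r hr0)).2 (hkey1 r hr0)) hlogr
  have hF2 : ∀ ε > (0:ℝ), ∀ᶠ s in l, h s ≤ g (4⁻¹ * s) + ε := by
    intro ε hε
    set K : ℝ := max 1 ((Real.log C₀ + M * Real.log 4)/ε) with hK
    have hK1 : (1:ℝ) ≤ K := le_max_left _ _
    filter_upwards [hsmall (Real.exp (-K)) (Real.exp_pos _), hlogkq] with s hs hkq
    obtain ⟨hs0, hsK⟩ := hs
    have hT : K < -Real.log s := by
      have h6 := Real.log_lt_log hs0 hsK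
      rw [Real.log_exp] at h6
      linarith
    have hT0 : 0 < -Real.log s := by linarith
    have hlogs : Real.log s < 0 := by linarith
    have hr'0 : 0 < 4⁻¹ * s := by positivity
    have hlogr' : Real.log (4⁻¹*s) = Real.log s - Real.log 4 := by
      rw [Real.log_mul (by norm_num) (ne_of_gt hs0), Real.log_inv]
      ring
    have h3 : -Real.log (4⁻¹*s) = (-Real.log s) + Real.log 4 := by rw [hlogr']; ring
    rw [h3] at hkq
    have hA2 : -(M * ((-Real.log s) + Real.log 4)) ≤ Real.log (Sf (4⁻¹*s)) := by
      have h2 := hSlog_lb (4⁻¹*s) hr'0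
      linarith
    have hKε : Real.log C₀ + M * Real.log 4 ≤ ε * (-Real.log s) := by
      have h4 : (Real.log C₀ + M * Real.log 4)/ε ≤ K := le_max_right _ _
      rw [div_le_iff₀ hε] at h4
      calc Real.log C₀ + M*Real.log 4 ≤ K * ε := h4
        _ ≤ (-Real.log s) * ε := mul_le_mul_of_nonneg_right hT.le hε.le
        _ = ε * (-Real.log s) := mul_comm _ _
    have harith := BLC_arith2 hT0 l4pos hlc hM0.le hA2 hKε
    have h1 : Real.log (If s)/Real.log s ≤
        (Real.log C₀ - Real.log (Sf (4⁻¹*s)))/(-Real.log s) := by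
      have hchain : Real.log (Sf (4⁻¹*s)) - Real.log C₀ ≤ Real.log (If s) := hIlog_lb s hs0
      have hstep := BLC_div_le_div_neg hchain hlogs
      calc Real.log (If s)/Real.log s
          ≤ (Real.log (Sf (4⁻¹*s)) - Real.log C₀)/Real.log s := hstep
        _ = (Real.log C₀ - Real.log (Sf (4⁻¹*s)))/(-Real.log s) := by
            rw [div_neg, ← neg_div, neg_sub]
    have h2 : (-(Real.log (Sf (4⁻¹*s))))/((-Real.log s) + Real.log 4) =
        Real.log (Sf (4⁻¹*s))/Real.log (4⁻¹*s) := by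
      rw [hlogr', show (-Real.log s) + Real.log 4 = -(Real.log s - Real.log 4) by ring,
        div_neg, neg_div, neg_neg]
    show Real.log (If s)/Real.log s ≤ Real.log (Sf (4⁻¹*s))/Real.log (4⁻¹*s) + ε
    calc Real.log (If s)/Real.log s
        ≤ (Real.log C₀ - Real.log (Sf (4⁻¹*s)))/(-Real.log s) := h1
      _ ≤ (-(Real.log (Sf (4⁻¹*s))))/((-Real.log s) + Real.log 4) + ε := harith
      _ = Real.log (Sf (4⁻¹*s))/Real.log (4⁻¹*s) + ε := by rw [h2]
  have hmain := BLC_endgame g h M₁ (hldef ▸ hgb) (hldef ▸ hhb) (hldef ▸ hF1)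
    (fun ε hε => hldef ▸ hF2 ε hε)
  have eqU : Filter.limsup g l = corrUpper μ := by
    rw [hcorrU, hldef]
    exact hmain.1
  have eqL : Filter.liminf g l = corrLower μ := by
    rw [hcorrL, hldef]
    exact hmain.2
  refine ⟨eqU, eqL, ?_⟩
  intro ε hε
  have bg_le : IsBoundedUnder (· ≤ ·) l g :=
    ⟨M₁, Filter.eventually_map.2 (hgb.mono fun r hr => (abs_le.1 hr).2)⟩
  have bg_ge : IsBoundedUnder (· ≥ ·) l g :=
    ⟨-M₁, Filter.eventually_map.2 (hgb.mono fun r hr => (abs_le.1 hr).1)⟩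
  have hUlt : Filter.limsup g l < corrUpper μ + ε := by rw [eqU]; linarith
  have ev1 : ∀ᶠ r in l, g r < corrUpper μ + ε := eventually_lt_of_limsup_lt hUlt bg_le
  have hLlt : corrLower μ - ε < Filter.liminf g l := by rw [eqL]; linarith
  have ev2 : ∀ᶠ r in l, corrLower μ - ε < g r := eventually_lt_of_lt_liminf hLlt bg_ge
  have evAll : ∀ᶠ r in l, (0 < r ∧ r < 1) ∧
      (g r < corrUpper μ + ε ∧ corrLower μ - ε < g r) := by
    filter_upwards [hsmall 1 one_pos, ev1, ev2] with r h1 h2 h3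
    exact ⟨⟨h1.1, h1.2⟩, h2, h3⟩
  have evAll' : {r : ℝ | (0 < r ∧ r < 1) ∧
      (g r < corrUpper μ + ε ∧ corrLower μ - ε < g r)} ∈ nhdsWithin (0:ℝ) (Set.Ioi 0) :=
    hldef ▸ evAll
  obtain ⟨u, hu, hsub⟩ := mem_nhdsGT_iff_exists_Ioo_subset.1 evAll'
  refine ⟨u, hu, ?_⟩
  intro r hr0 hru
  obtain ⟨⟨-, hr1⟩, hgU, hgL⟩ := hsub ⟨hr0, hru⟩
  have hlogr : Real.log r < 0 := Real.log_neg hr0 hr1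
  have hSp : 0 < Sf r := hSpos r hr0
  have hgU' : Real.log (Sf r)/Real.log r < corrUpper μ + ε := hgU
  have hgL' : corrLower μ - ε < Real.log (Sf r)/Real.log r := hgL
  constructor
  · have h2 := (div_lt_iff_of_neg hlogr).1 hgU'
    calc r ^ (corrUpper μ + ε) = Real.exp (Real.log r * (corrUpper μ + ε)) :=
        Real.rpow_def_of_pos hr0 _
      _ ≤ Real.exp (Real.log (Sf r)) := Real.exp_le_exp.2 (by nlinarith)
      _ = Sf r := Real.exp_log hSp
  · have h2 := (lt_div_iff_of_neg hlogr).1 hgL'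
    calc Sf r = Real.exp (Real.log (Sf r)) := (Real.exp_log hSp).symm
      _ ≤ Real.exp (Real.log r * (corrLower μ - ε)) := Real.exp_le_exp.2 (by nlinarith)
      _ = r ^ (corrLower μ - ε) := (Real.rpow_def_of_pos hr0 _).symm
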